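/- Let K = ℚ(√d) with d a positive squarefree integer and ε a fundamental unit of O. Let α ∈ V be a visible point and let α' ∈ V be any visible point with α' ≁ α and log|α'/ᾱ'| ≡ log|α/ᾱ| (mod log|ε²|). Then √(|N(α)N(α')|) = √d · |N(α)| / gcd(N(α), d), where gcd denotes the positive greatest common divisor of the integers N(α) and d. -/

import Mathlib

open MeasureTheory

/-- ω ∈ ℝ for the real quadratic field ℚ(√d), d > 0:
    ω = √d if d ≡ 2,3 mod 4 and ω = (1+√d)/2 if d ≡ 1 mod 4. -/
noncomputable def omgR (d : ℤ) : ℝ :=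
  if d % 4 = 1 then (1 + Real.sqrt d) / 2 else Real.sqrt d

/-- The conjugate ω̄ of ω. -/
noncomputable def omgRBar (d : ℤ) : ℝ :=
  if d % 4 = 1 then (1 - Real.sqrt d) / 2 else -Real.sqrt d

/-- The element a + bω of O = ℤ ⊕ ℤω ⊂ ℝ. -/
noncomputable def eltR (d a b : ℤ) : ℝ := (a : ℝ) + (b : ℝ) * omgR d

/-- The conjugate a + bω̄ of a + bω. -/
noncomputable def eltRBar (d a b : ℤ) : ℝ := (a : ℝ) + (b : ℝ) * omgRBar d

/-- The norm N(a + bω) = (a+bω)(a+bω̄) as a rational integer. -/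
def NrmR (d a b : ℤ) : ℤ :=
  if d % 4 = 1 then a ^ 2 + a * b + b ^ 2 * ((1 - d) / 4) else a ^ 2 - d * b ^ 2

/-- Membership in the ring of integers O = ℤ ⊕ ℤω ⊂ ℝ. -/
def InOR (d : ℤ) (x : ℝ) : Prop := ∃ a b : ℤ, x = eltR d a b

/-- x is a unit of the ring O. -/
def IsUnitOR (d : ℤ) (x : ℝ) : Prop := InOR d x ∧ ∃ y : ℝ, InOR d y ∧ x * y = 1

/-- ε is a fundamental unit of O: the unit group of O is {±εⁿ : n ∈ ℤ}. -/
def IsFundamentalUnit (d : ℤ) (ε : ℝ) : Prop :=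
  ∀ x : ℝ, IsUnitOR d x ↔ ∃ n : ℤ, x = ε ^ n ∨ x = -(ε ^ n)

/-- γ ∼ γ' : there are a unit υ and positive integers m, n with υmγ' = nγ. -/
def SimR (d : ℤ) (γ γ' : ℝ) : Prop :=
  ∃ υ : ℝ, IsUnitOR d υ ∧ ∃ m n : ℕ, 0 < m ∧ 0 < n ∧ υ * (m : ℝ) * γ' = (n : ℝ) * γ

namespace MF

/-- product first coordinate -/
def mA (d a b c e : ℤ) : ℤ := if d % 4 = 1 then a*c + b*e*((d-1)/4) else a*c + b*e*d
def mB (d a b c e : ℤ) : ℤ := if d % 4 = 1 then a*e + b*c + b*e else a*e + b*c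
def bA (d a b : ℤ) : ℤ := if d % 4 = 1 then a + b else a
def sA (d P Q : ℤ) : ℤ := if d % 4 = 1 then 2*((d-1)/4)*Q - P else d*Q
def sB (d P Q : ℤ) : ℤ := if d % 4 = 1 then 2*P + Q else P

lemma exists_t {d : ℤ} (h : d % 4 = 1) : ∃ t, d = 4*t+1 ∧ (d-1)/4 = t ∧ (1-d)/4 = -t := by
  obtain ⟨t, ht⟩ : (4:ℤ) ∣ (d - 1) := by omega
  refine ⟨t, by omega, ?_, ?_⟩
  · rw [ht]; exact Int.mul_ediv_cancel_left t (by norm_num)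
  · have : (1 - d) = 4 * (-t) := by omega
    rw [this]; exact Int.mul_ediv_cancel_left _ (by norm_num)

variable {d : ℤ}

lemma hsq (hdpos : 0 ≤ d) : Real.sqrt d * Real.sqrt d = (d:ℝ) :=
  Real.mul_self_sqrt (by exact_mod_cast hdpos)

lemma elt_mul (hdpos : 0 ≤ d) (a b c e : ℤ) :
    eltR d a b * eltR d c e = eltR d (mA d a b c e) (mB d a b c e) := by
  have h4 := hsq hdpos
  by_cases h : d % 4 = 1
  · obtain ⟨t, ht, h1, h2⟩ := exists_t h
    have htR : (d:ℝ) = 4*(t:ℝ)+1 := by exact_mod_cast congrArg (fun x : ℤ => (x:ℝ)) ht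
    simp only [eltR, omgR, mA, mB, if_pos h, h1]
    push_cast
    linear_combination ((b:ℝ)*(e:ℝ)/4) * h4 + ((b:ℝ)*(e:ℝ)/4) * htR
  · simp only [eltR, omgR, mA, mB, if_neg h]
    push_cast
    linear_combination ((b:ℝ)*(e:ℝ)) * h4

lemma eltbar_mul (hdpos : 0 ≤ d) (a b c e : ℤ) :
    eltRBar d a b * eltRBar d c e = eltRBar d (mA d a b c e) (mB d a b c e) := by
  have h4 := hsq hdpos
  by_cases h : d % 4 = 1
  · obtain ⟨t, ht, h1, h2⟩ := exists_t h
    have htR : (d:ℝ) = 4*(t:ℝ)+1 := by exact_mod_cast congrArg (fun x : ℤ => (x:ℝ)) ht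
    simp only [eltRBar, omgRBar, mA, mB, if_pos h, h1]
    push_cast
    linear_combination ((b:ℝ)*(e:ℝ)/4) * h4 + ((b:ℝ)*(e:ℝ)/4) * htR
  · simp only [eltRBar, omgRBar, mA, mB, if_neg h]
    push_cast
    linear_combination ((b:ℝ)*(e:ℝ)) * h4

lemma elt_bar (a b : ℤ) : eltRBar d a b = eltR d (bA d a b) (-b) := by
  by_cases h : d % 4 = 1 <;>
    simp only [eltRBar, eltR, omgR, omgRBar, bA, if_pos, if_neg, h] <;> push_cast <;> ring

lemma elt_barbar (a b : ℤ) : eltRBar d (bA d a b) (-b) = eltR d a b := by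
  by_cases h : d % 4 = 1 <;>
    simp only [eltRBar, eltR, omgR, omgRBar, bA, if_pos, if_neg, h] <;> push_cast <;> ring

lemma elt_smul (c x y : ℤ) : eltR d (c*x) (c*y) = (c:ℝ) * eltR d x y := by
  simp only [eltR]; push_cast; ring

lemma nrm_real (hdpos : 0 ≤ d) (a b : ℤ) :
    (NrmR d a b : ℝ) = eltR d a b * eltRBar d a b := by
  have h4 := hsq hdpos
  by_cases h : d % 4 = 1
  · obtain ⟨t, ht, h1, h2⟩ := exists_t h
    have htR : (d:ℝ) = 4*(t:ℝ)+1 := by exact_mod_cast congrArg (fun x : ℤ => (x:ℝ)) ht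
    simp only [NrmR, eltR, eltRBar, omgR, omgRBar, if_pos h, h2]
    push_cast
    linear_combination ((b:ℝ)*(b:ℝ)/4) * h4 + ((b:ℝ)*(b:ℝ)/4) * htR
  · simp only [NrmR, eltR, eltRBar, omgR, omgRBar, if_neg h]
    push_cast
    linear_combination ((b:ℝ)*(b:ℝ)) * h4

lemma nrm_mul (a b c e : ℤ) :
    NrmR d (mA d a b c e) (mB d a b c e) = NrmR d a b * NrmR d c e := by
  by_cases h : d % 4 = 1
  · obtain ⟨t, ht, h1, h2⟩ := exists_t h
    have htR : (d:ℝ) = 4*(t:ℝ)+1 := by exact_mod_cast congrArg (fun x : ℤ => (x:ℝ)) ht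
    simp only [NrmR, mA, mB, if_pos h, h1, h2]; ring
  · simp only [NrmR, mA, mB, if_neg h]; ring

lemma nrm_bar (a b : ℤ) : NrmR d (bA d a b) (-b) = NrmR d a b := by
  by_cases h : d % 4 = 1
  · obtain ⟨t, ht, h1, h2⟩ := exists_t h
    have htR : (d:ℝ) = 4*(t:ℝ)+1 := by exact_mod_cast congrArg (fun x : ℤ => (x:ℝ)) ht
    simp only [NrmR, bA, if_pos h, h2]; ring
  · simp only [NrmR, bA, if_neg h]; ring

lemma sqrt_mul_elt (hdpos : 0 ≤ d) (P Q : ℤ) :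
    Real.sqrt d * eltR d P Q = eltR d (sA d P Q) (sB d P Q) := by
  have h4 := hsq hdpos
  by_cases h : d % 4 = 1
  · obtain ⟨t, ht, h1, h2⟩ := exists_t h
    have htR : (d:ℝ) = 4*(t:ℝ)+1 := by exact_mod_cast congrArg (fun x : ℤ => (x:ℝ)) ht
    simp only [eltR, omgR, sA, sB, if_pos h, h1]
    push_cast
    linear_combination ((Q:ℝ)/2) * h4 + ((Q:ℝ)/2) * htR
  · simp only [eltR, omgR, sA, sB, if_neg h]
    push_cast
    linear_combination ((Q:ℝ)) * h4


variable {d : ℤ}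

lemma sqrt_irr (hd : Squarefree d) (hdpos : 0 < d) (hd1 : d ≠ 1) :
    Irrational (Real.sqrt d) := by
  rw [irrational_sqrt_intCast_iff_of_nonneg hdpos.le]
  rintro ⟨r, hr⟩
  have : IsUnit r := hd r (by rw [hr])
  rcases Int.isUnit_iff.mp this with h | h <;> subst h <;> simp at hr <;> omega

lemma omg_irr (hd : Squarefree d) (hdpos : 0 < d) (hd1 : d ≠ 1) :
    Irrational (omgR d) := by
  have hs := sqrt_irr hd hdpos hd1
  unfold omgR
  split_ifs with h
  · intro ⟨q, hq⟩
    exact hs ⟨2*q - 1, by push_cast; linarith [hq]⟩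
  · exact hs

lemma elt_uniq (hirr : Irrational (omgR d)) {a b a' b' : ℤ}
    (h : eltR d a b = eltR d a' b') : a = a' ∧ b = b' := by
  by_cases hb : b = b'
  · subst hb
    refine ⟨?_, rfl⟩
    have : (a:ℝ) = a' := by unfold eltR at h; linarith
    exact_mod_cast this
  · exfalso
    have hbb : ((b:ℝ) - b') ≠ 0 := by
      intro hc
      apply hb
      have : (b:ℝ) = b' := by linarith
      exact_mod_cast this
    have hkey : omgR d * ((b:ℝ) - b') = (a':ℝ) - a := by
      unfold eltR at h; linear_combination h
    refine hirr ⟨((a' - a : ℤ) : ℚ) / ((b - b' : ℤ) : ℚ), ?_⟩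
    push_cast
    field_simp
    linear_combination -hkey


lemma odd_coprime_two {W d : ℤ} (hWd : W ∣ d) (hodd : ¬ (2:ℤ) ∣ d) : IsCoprime W (2:ℤ) := by
  rw [Int.isCoprime_iff_gcd_eq_one]
  have h2 : Int.gcd W 2 ∣ 2 := by
    have : (Int.gcd W 2 : ℤ) ∣ 2 := Int.gcd_dvd_right _ _
    exact_mod_cast this
  have hW : (Int.gcd W 2 : ℤ) ∣ W := Int.gcd_dvd_left _ _
  have hne : Int.gcd W 2 ≠ 0 := by
    intro h
    have := (Int.gcd_eq_zero_iff.mp h).2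
    norm_num at this
  have hle := Nat.le_of_dvd (by norm_num) h2
  have hcases : Int.gcd W 2 = 1 ∨ Int.gcd W 2 = 2 := by omega
  rcases hcases with h | h
  · exact h
  · exfalso
    apply hodd
    refine dvd_trans ?_ hWd
    rw [h] at hW
    exact_mod_cast hW

lemma key_arith1 (d P Q a' b' N₂ r : ℤ) (hdsf : Squarefree d)
    (hPQ : Int.gcd P Q = 1) (hab' : Int.gcd a' b' = 1) (hN : N₂ ≠ 0) (hr : r ≠ 0)
    (h1 : N₂ * a' = r * (d * Q)) (h2 : N₂ * b' = r * P)
    (hnorm : P ^ 2 - d * Q ^ 2 = N₂) :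
    N₂.natAbs = r.natAbs * Int.gcd N₂ d := by
  obtain ⟨x, y, hxy⟩ := Int.isCoprime_iff_gcd_eq_one.mpr hab'
  set W : ℤ := x * (d * Q) + y * P with hWdef
  have hNW : N₂ = r * W := by rw [hWdef]; linear_combination x * h1 + y * h2 - N₂ * hxy
  have hW0 : W ≠ 0 := by intro h; rw [h, mul_zero] at hNW; exact hN hNW
  have hc1 : W * a' = d * Q := by
    have h : r * (W * a') = r * (d * Q) := by linear_combination h1 - a' * hNW
    exact mul_left_cancel₀ hr h
  have hc2 : W * b' = P := by
    have h : r * (W * b') = r * P := by linear_combination h2 - b' * hNW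
    exact mul_left_cancel₀ hr h
  have hWP : W ∣ P := ⟨b', hc2.symm⟩
  have hcoPQ : IsCoprime P Q := Int.isCoprime_iff_gcd_eq_one.mpr hPQ
  have hcoWQ : IsCoprime W Q := hcoPQ.of_isCoprime_of_dvd_left hWP
  have hWd : W ∣ d := by
    have hQd : W ∣ Q * d := by rw [mul_comm]; exact ⟨a', hc1.symm⟩
    exact hcoWQ.dvd_of_dvd_mul_left hQd
  have hWN : W ∣ N₂ := by
    rw [← hnorm]
    exact dvd_sub (dvd_pow hWP two_ne_zero) (dvd_mul_of_dvd_left hWd _)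
  have hWg : W ∣ (Int.gcd N₂ d : ℤ) := Int.dvd_coe_gcd hWN hWd
  have hgN : (Int.gcd N₂ d : ℤ) ∣ N₂ := Int.gcd_dvd_left _ _
  have hgd : (Int.gcd N₂ d : ℤ) ∣ d := Int.gcd_dvd_right _ _
  have hgsf : Squarefree ((Int.gcd N₂ d : ℕ) : ℤ) := Squarefree.squarefree_of_dvd hgd hdsf
  have hgP2 : (Int.gcd N₂ d : ℤ) ∣ P ^ 2 := by
    have hP2 : P ^ 2 = N₂ + d * Q ^ 2 := by linarith [hnorm]
    rw [hP2]; exact dvd_add hgN (dvd_mul_of_dvd_left hgd _)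
  have hgP : (Int.gcd N₂ d : ℤ) ∣ P := (hgsf.dvd_pow_iff_dvd two_ne_zero).mp hgP2
  have hgW : (Int.gcd N₂ d : ℤ) ∣ W := by
    have hWalt : W = x * Q * d + y * P := by rw [hWdef]; ring
    rw [hWalt]; exact dvd_add (hgd.mul_left _) (hgP.mul_left _)
  have hWabs : W.natAbs = Int.gcd N₂ d := by
    have h1' := Int.natAbs_dvd_natAbs.mpr hWg
    have h2' := Int.natAbs_dvd_natAbs.mpr hgW
    simpa using Nat.dvd_antisymm h1' (by simpa using h2')
  conv_lhs => rw [hNW]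
  rw [Int.natAbs_mul, hWabs]

lemma key_arith2 (d t P Q a' b' N₂ r : ℤ) (hdsf : Squarefree d) (hd4 : d = 4 * t + 1)
    (hPQ : Int.gcd P Q = 1) (hab' : Int.gcd a' b' = 1) (hN : N₂ ≠ 0) (hr : r ≠ 0)
    (h1 : N₂ * a' = r * (2 * t * Q - P)) (h2 : N₂ * b' = r * (2 * P + Q))
    (hnorm : P ^ 2 + P * Q + Q ^ 2 * (-t) = N₂) :
    N₂.natAbs = r.natAbs * Int.gcd N₂ d := by
  have hdodd : ¬ (2:ℤ) ∣ d := by omega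
  obtain ⟨x, y, hxy⟩ := Int.isCoprime_iff_gcd_eq_one.mpr hab'
  set W : ℤ := x * (2 * t * Q - P) + y * (2 * P + Q) with hWdef
  have hNW : N₂ = r * W := by rw [hWdef]; linear_combination x * h1 + y * h2 - N₂ * hxy
  have hW0 : W ≠ 0 := by intro h; rw [h, mul_zero] at hNW; exact hN hNW
  have hc1 : W * a' = 2 * t * Q - P := by
    have h : r * (W * a') = r * (2 * t * Q - P) := by linear_combination h1 - a' * hNW
    exact mul_left_cancel₀ hr h
  have hc2 : W * b' = 2 * P + Q := by
    have h : r * (W * b') = r * (2 * P + Q) := by linear_combination h2 - b' * hNW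
    exact mul_left_cancel₀ hr h
  have hWc1 : W ∣ 2 * t * Q - P := ⟨a', hc1.symm⟩
  have hWc2 : W ∣ 2 * P + Q := ⟨b', hc2.symm⟩
  have hWQd : W ∣ Q * d := by
    have h : Q * d = W * (2 * a' + b') := by linear_combination -2 * hc1 - hc2 + Q * hd4
    exact ⟨_, h⟩
  have hcoPQ : IsCoprime P Q := Int.isCoprime_iff_gcd_eq_one.mpr hPQ
  have hcoWQ : IsCoprime W Q := by
    rw [Int.isCoprime_iff_gcd_eq_one]
    have heW : (Int.gcd W Q : ℤ) ∣ W := Int.gcd_dvd_left _ _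
    have heQ : (Int.gcd W Q : ℤ) ∣ Q := Int.gcd_dvd_right _ _
    have he2P : (Int.gcd W Q : ℤ) ∣ 2 * P := by
      have h : 2 * P = (2 * P + Q) - Q := by ring
      rw [h]; exact dvd_sub (heW.trans hWc2) heQ
    have hcoeP : IsCoprime ((Int.gcd W Q : ℕ) : ℤ) P :=
      hcoPQ.symm.of_isCoprime_of_dvd_left heQ
    have he2' : (Int.gcd W Q : ℤ) ∣ 2 := hcoeP.dvd_of_dvd_mul_right he2P
    have he2 : Int.gcd W Q ∣ 2 := by exact_mod_cast he2'
    have hne : Int.gcd W Q ≠ 0 := by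
      intro h; exact hW0 (Int.gcd_eq_zero_iff.mp h).1
    have hle := Nat.le_of_dvd (by norm_num) he2
    have hcases : Int.gcd W Q = 1 ∨ Int.gcd W Q = 2 := by omega
    rcases hcases with h | h
    · exact h
    · exfalso
      rw [h] at heW heQ
      have h2W : (2:ℤ) ∣ W := by exact_mod_cast heW
      have h2Q : (2:ℤ) ∣ Q := by exact_mod_cast heQ
      have h2P : (2:ℤ) ∣ P := by
        obtain ⟨c, hcp⟩ := h2W.trans hWc1
        exact ⟨t * Q - c, by linarith⟩
      have hdv : (2:ℤ) ∣ (Int.gcd P Q : ℤ) := Int.dvd_coe_gcd h2P h2Q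
      rw [hPQ] at hdv
      norm_num at hdv
  have hWd : W ∣ d := hcoWQ.dvd_of_dvd_mul_left hWQd
  have hWodd : IsCoprime W (2:ℤ) := odd_coprime_two hWd hdodd
  have h4N : 4 * N₂ = (2 * P + Q) ^ 2 - d * Q ^ 2 := by
    linear_combination -4 * hnorm + Q ^ 2 * hd4
  have hW4N : W ∣ 4 * N₂ := by
    rw [h4N]
    exact dvd_sub (dvd_pow hWc2 two_ne_zero) (dvd_mul_of_dvd_left hWd _)
  have hco4 : IsCoprime W (4:ℤ) := by
    have h := hWodd.mul_right hWodd
    norm_num at h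
    exact h
  have hWN : W ∣ N₂ := hco4.dvd_of_dvd_mul_left hW4N
  have hWg : W ∣ (Int.gcd N₂ d : ℤ) := Int.dvd_coe_gcd hWN hWd
  have hgN : (Int.gcd N₂ d : ℤ) ∣ N₂ := Int.gcd_dvd_left _ _
  have hgd : (Int.gcd N₂ d : ℤ) ∣ d := Int.gcd_dvd_right _ _
  have hgsf : Squarefree ((Int.gcd N₂ d : ℕ) : ℤ) := Squarefree.squarefree_of_dvd hgd hdsf
  have hgc2sq : (Int.gcd N₂ d : ℤ) ∣ (2 * P + Q) ^ 2 := by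
    have h : (2 * P + Q) ^ 2 = 4 * N₂ + d * Q ^ 2 := by linarith [h4N]
    rw [h]; exact dvd_add (hgN.mul_left 4) (dvd_mul_of_dvd_left hgd _)
  have hgc2 : (Int.gcd N₂ d : ℤ) ∣ 2 * P + Q := (hgsf.dvd_pow_iff_dvd two_ne_zero).mp hgc2sq
  have hgodd : IsCoprime ((Int.gcd N₂ d : ℕ) : ℤ) (2:ℤ) := odd_coprime_two hgd hdodd
  have hgc1 : (Int.gcd N₂ d : ℤ) ∣ 2 * t * Q - P := by
    have h2c1 : (Int.gcd N₂ d : ℤ) ∣ 2 * (2 * t * Q - P) := by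
      have h : 2 * (2 * t * Q - P) = Q * d - (2 * P + Q) := by linear_combination -Q * hd4
      rw [h]; exact dvd_sub (hgd.mul_left Q) hgc2
    exact hgodd.dvd_of_dvd_mul_left h2c1
  have hgW : (Int.gcd N₂ d : ℤ) ∣ W := by
    rw [hWdef]
    exact dvd_add (hgc1.mul_left x) (hgc2.mul_left y)
  have hWabs : W.natAbs = Int.gcd N₂ d := by
    have h1' := Int.natAbs_dvd_natAbs.mpr hWg
    have h2' := Int.natAbs_dvd_natAbs.mpr hgW
    simpa using Nat.dvd_antisymm h1' (by simpa using h2')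
  conv_lhs => rw [hNW]
  rw [Int.natAbs_mul, hWabs]


lemma nrm_one {d : ℤ} : NrmR d 1 0 = 1 := by unfold NrmR; split <;> ring

lemma elt_one {d : ℤ} : eltR d 1 0 = 1 := by simp [eltR]

lemma unit_coords {d : ℤ} (hdQ : 0 ≤ d) (hirr : Irrational (omgR d)) {x : ℝ}
    (hx : IsUnitOR d x) :
    ∃ p q : ℤ, x = eltR d p q ∧ (NrmR d p q = 1 ∨ NrmR d p q = -1) := by
  obtain ⟨⟨p, q, hpq⟩, y, ⟨c, e, hce⟩, hxy⟩ := hx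
  refine ⟨p, q, hpq, ?_⟩
  have h1 : eltR d (mA d p q c e) (mB d p q c e) = eltR d 1 0 := by
    rw [← elt_mul hdQ, ← hpq, ← hce, hxy, elt_one]
  obtain ⟨hA, hB⟩ := elt_uniq hirr h1
  have h2 : NrmR d p q * NrmR d c e = 1 := by
    rw [← nrm_mul, hA, hB, nrm_one]
  exact Int.isUnit_iff.mp (IsUnit.of_mul_eq_one _ h2)

lemma bA_zero {d a : ℤ} : bA d a 0 = a := by unfold bA; split <;> ring

end MF

/-- In a real quadratic field with fundamental unit ε: if α, α' are
    non-equivalent visible points with log|α/ᾱ| ≡ log|α'/ᾱ'| mod log|ε²|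
    (i.e. φ(π(α)) = φ(π(α')) = ξ), then
    M(ξ) = √(|N(α)N(α')|) = √d·|N(α)| / gcd(N(α), d). -/
theorem M_formula
    (d : ℤ) (hd : Squarefree d) (hdpos : 0 < d) (hd1 : d ≠ 1)
    (ε : ℝ) (hε : IsFundamentalUnit d ε)
    (a b a' b' : ℤ) (hab : Int.gcd a b = 1) (hab' : Int.gcd a' b' = 1)
    (hnsim : ¬ SimR d (eltR d a b) (eltR d a' b'))
    (hcong : ∃ k : ℤ,
      Real.log |eltR d a' b' / eltRBar d a' b'| -
        Real.log |eltR d a b / eltRBar d a b| = (k : ℝ) * Real.log (ε ^ 2)) :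
    Real.sqrt ((|NrmR d a b * NrmR d a' b'| : ℤ) : ℝ) =
      Real.sqrt (d : ℝ) * ((|NrmR d a b| : ℤ) : ℝ) /
        ((Int.gcd (NrmR d a b) d : ℕ) : ℝ) := by
  classical
  obtain ⟨k, hk⟩ := hcong
  have hdQ : (0:ℤ) ≤ d := hdpos.le
  have hdR : (0:ℝ) ≤ (d:ℝ) := by exact_mod_cast hdQ
  have hirr := MF.omg_irr hd hdpos hd1
  -- zero coordinates lemma
  have heltz : ∀ x y : ℤ, eltR d x y = 0 → x = 0 ∧ y = 0 := by
    intro x y hxy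
    have h0 : eltR d x y = eltR d 0 0 := by
      rw [hxy]; simp [eltR]
    exact MF.elt_uniq hirr h0
  have hbarz : ∀ x y : ℤ, eltRBar d x y = 0 → x = 0 ∧ y = 0 := by
    intro x y hxy
    rw [MF.elt_bar] at hxy
    obtain ⟨h1, h2⟩ := heltz _ _ hxy
    have hy : y = 0 := by omega
    subst hy
    rw [MF.bA_zero] at h1
    exact ⟨h1, rfl⟩
  have hα : eltR d a b ≠ 0 := by
    intro h; obtain ⟨h1, h2⟩ := heltz _ _ h; rw [h1, h2] at hab; simp at hab
  have hα' : eltR d a' b' ≠ 0 := by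
    intro h; obtain ⟨h1, h2⟩ := heltz _ _ h; rw [h1, h2] at hab'; simp at hab'
  have hᾱ : eltRBar d a b ≠ 0 := by
    intro h; obtain ⟨h1, h2⟩ := hbarz _ _ h; rw [h1, h2] at hab; simp at hab
  have hᾱ' : eltRBar d a' b' ≠ 0 := by
    intro h; obtain ⟨h1, h2⟩ := hbarz _ _ h; rw [h1, h2] at hab'; simp at hab'
  have hNr : ((NrmR d a b : ℤ) : ℝ) = eltR d a b * eltRBar d a b := MF.nrm_real hdQ a b
  have hNr' : ((NrmR d a' b' : ℤ) : ℝ) = eltR d a' b' * eltRBar d a' b' := MF.nrm_real hdQ a' b'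
  have hN0 : NrmR d a b ≠ 0 := by
    intro h
    have : ((NrmR d a b : ℤ) : ℝ) = 0 := Int.cast_eq_zero.mpr h
    rw [hNr] at this
    exact (mul_ne_zero hα hᾱ) this
  have hN0' : NrmR d a' b' ≠ 0 := by
    intro h
    have : ((NrmR d a' b' : ℤ) : ℝ) = 0 := Int.cast_eq_zero.mpr h
    rw [hNr'] at this
    exact (mul_ne_zero hα' hᾱ') this
  -- ε and w = ε^k
  have hεunit : IsUnitOR d ε := (hε ε).mpr ⟨1, Or.inl (zpow_one ε).symm⟩
  have hε0 : ε ≠ 0 := by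
    obtain ⟨_, y, _, hy⟩ := hεunit; exact left_ne_zero_of_mul_eq_one hy
  have hwunit : IsUnitOR d (ε ^ (k:ℤ)) := (hε _).mpr ⟨k, Or.inl rfl⟩
  obtain ⟨p, q, hwpq, hη⟩ := MF.unit_coords hdQ hirr hwunit
  have hwwbar : ε ^ (k:ℤ) * eltRBar d p q = ((NrmR d p q : ℤ) : ℝ) := by
    rw [hwpq, ← MF.nrm_real hdQ]
  have hηR0 : ((NrmR d p q : ℤ) : ℝ) ≠ 0 := by
    rcases hη with h | h <;> rw [h] <;> norm_num
  have hw0 : ε ^ (k:ℤ) ≠ 0 := zpow_ne_zero _ hε0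
  have hwbar0 : eltRBar d p q ≠ 0 := by
    intro h; rw [h, mul_zero] at hwwbar; exact hηR0 hwwbar.symm
  -- from log congruence to multiplicative relation
  have hX : 0 < |eltR d a b / eltRBar d a b| := abs_pos.mpr (div_ne_zero hα hᾱ)
  have hX' : 0 < |eltR d a' b' / eltRBar d a' b'| := abs_pos.mpr (div_ne_zero hα' hᾱ')
  have hε2 : (0:ℝ) < ε ^ 2 := lt_of_le_of_ne (sq_nonneg ε) (Ne.symm (pow_ne_zero 2 hε0))
  have hexp : Real.exp ((k:ℝ) * Real.log (ε ^ 2)) = (ε ^ 2) ^ (k:ℤ) := by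
    rw [← Real.rpow_intCast (ε ^ 2) k, Real.rpow_def_of_pos hε2, mul_comm]
  have hzp : (ε ^ 2) ^ (k:ℤ) = (ε ^ (k:ℤ)) ^ 2 := by
    rw [← zpow_natCast ε 2, ← zpow_mul, mul_comm, zpow_mul, zpow_natCast]
  have habs : |eltR d a' b' / eltRBar d a' b'| =
      |eltR d a b / eltRBar d a b| * (ε ^ (k:ℤ)) ^ 2 := by
    calc |eltR d a' b' / eltRBar d a' b'|
        = Real.exp (Real.log |eltR d a' b' / eltRBar d a' b'|) := (Real.exp_log hX').symm
      _ = Real.exp (Real.log |eltR d a b / eltRBar d a b| + (k:ℝ) * Real.log (ε ^ 2)) := by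
          rw [show Real.log |eltR d a' b' / eltRBar d a' b'|
              = Real.log |eltR d a b / eltRBar d a b| + (k:ℝ) * Real.log (ε ^ 2) by
            linarith [hk]]
      _ = Real.exp (Real.log |eltR d a b / eltRBar d a b|) *
            Real.exp ((k:ℝ) * Real.log (ε ^ 2)) := Real.exp_add _ _
      _ = |eltR d a b / eltRBar d a b| * (ε ^ (k:ℤ)) ^ 2 := by
          rw [Real.exp_log hX, hexp, hzp]
  have habs2 : |eltR d a' b' / eltRBar d a' b'| =
      |(ε ^ (k:ℤ)) ^ 2 * (eltR d a b / eltRBar d a b)| := by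
    rw [abs_mul, abs_of_nonneg (sq_nonneg (ε ^ (k:ℤ)))]
    rw [habs]; ring
  obtain ⟨s, hs1, hsr⟩ : ∃ s : ℤ, (s = 1 ∨ s = -1) ∧
      eltR d a' b' * eltRBar d a b =
        (s:ℝ) * (ε ^ (k:ℤ)) ^ 2 * (eltRBar d a' b' * eltR d a b) := by
    rcases abs_eq_abs.mp habs2 with h | h
    · refine ⟨1, Or.inl rfl, ?_⟩
      field_simp at h
      push_cast
      linear_combination h
    · refine ⟨-1, Or.inr rfl, ?_⟩
      field_simp at h
      push_cast
      linear_combination h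
  have hs2 : (s:ℝ) * (s:ℝ) = 1 := by rcases hs1 with h | h <;> rw [h] <;> norm_num
  -- γ and its coordinates
  have hδ : eltR d a' b' * eltRBar d a b
      = eltR d (MF.mA d a' b' (MF.bA d a b) (-b)) (MF.mB d a' b' (MF.bA d a b) (-b)) := by
    rw [MF.elt_bar, MF.elt_mul hdQ]
  set D1 := MF.mA d a' b' (MF.bA d a b) (-b) with hD1
  set D2 := MF.mB d a' b' (MF.bA d a b) (-b) with hD2
  set u := MF.mA d D1 D2 (MF.bA d p q) (-q) with hu
  set v := MF.mB d D1 D2 (MF.bA d p q) (-q) with hv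
  have hγ : eltR d a' b' * eltRBar d a b * eltRBar d p q = eltR d u v := by
    rw [hδ, MF.elt_bar p q]
    exact MF.elt_mul hdQ _ _ _ _
  have hγbar : eltRBar d u v = eltRBar d a' b' * eltR d a b * eltR d p q := by
    rw [hu, hv, ← MF.eltbar_mul hdQ, hD1, hD2, ← MF.eltbar_mul hdQ,
      MF.elt_barbar, MF.elt_barbar]
  have hNuv : NrmR d u v = NrmR d a' b' * NrmR d a b * NrmR d p q := by
    rw [hu, hv, MF.nrm_mul, hD1, hD2, MF.nrm_mul, MF.nrm_bar, MF.nrm_bar]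
  -- the conjugation relation
  have hτ : (s:ℝ) * eltR d u v = ((NrmR d p q : ℤ) : ℝ) * eltRBar d u v := by
    rw [← hγ, hγbar]
    linear_combination (eltRBar d p q * (s:ℝ)) * hsr
      + (eltRBar d a' b' * eltR d a b * ε ^ (k:ℤ)) * hwwbar
      + ((ε ^ (k:ℤ)) ^ 2 * eltRBar d a' b' * eltR d a b * eltRBar d p q) * hs2
      + (((NrmR d p q : ℤ) : ℝ) * eltRBar d a' b' * eltR d a b) * hwpq
  have hcoord : eltR d (s * u) (s * v)
      = eltR d (NrmR d p q * MF.bA d u v) (NrmR d p q * (-v)) := by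
    rw [MF.elt_smul, MF.elt_smul, ← MF.elt_bar]
    exact hτ
  obtain ⟨hU, hV⟩ := MF.elt_uniq hirr hcoord
  -- the master real equation
  have hE : eltR d u v * (eltR d a b * ε ^ (k:ℤ))
      = ((NrmR d p q : ℤ) : ℝ) * ((NrmR d a b : ℤ) : ℝ) * eltR d a' b' := by
    rw [← hγ]
    linear_combination (-((NrmR d p q : ℤ) : ℝ) * eltR d a' b') * hNr
      + (eltR d a' b' * eltR d a b * eltRBar d a b) * hwwbar
  have hsη : s = NrmR d p q ∨ s = -NrmR d p q := by
    rcases hs1 with h | h <;> rcases hη with h' | h' <;> omega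
  rcases hsη with hcase | hcase
  · -- Case A : γ is rational integer, derive equivalence, contradiction
    exfalso
    have hv0 : v = 0 := by
      rcases hη with h | h <;> rw [hcase, h] at hV <;> omega
    have hγu : eltR d u v = (u:ℝ) := by rw [hv0]; simp [eltR]
    have hu0 : u ≠ 0 := by
      intro h
      apply mul_ne_zero (mul_ne_zero hα' hᾱ) hwbar0
      rw [hγ, hγu, h, Int.cast_zero]
    have hEu : (u:ℝ) * (eltR d a b * ε ^ (k:ℤ))
        = ((NrmR d p q : ℤ) : ℝ) * ((NrmR d a b : ℤ) : ℝ) * eltR d a' b' := by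
      rw [← hγu]; exact hE
    have hwinv : ε ^ (k:ℤ) * ε ^ (-k:ℤ) = 1 := by
      rw [← zpow_add₀ hε0]; simp
    have hE2 : (u:ℝ) * eltR d a b
        = ((NrmR d p q * NrmR d a b : ℤ) : ℝ) * ε ^ (-k:ℤ) * eltR d a' b' := by
      calc (u:ℝ) * eltR d a b
          = (u:ℝ) * eltR d a b * (ε ^ (k:ℤ) * ε ^ (-k:ℤ)) := by rw [hwinv, mul_one]
        _ = ((u:ℝ) * (eltR d a b * ε ^ (k:ℤ))) * ε ^ (-k:ℤ) := by ring
        _ = (((NrmR d p q : ℤ) : ℝ) * ((NrmR d a b : ℤ) : ℝ) * eltR d a' b') * ε ^ (-k:ℤ) := by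
            rw [hEu]
        _ = ((NrmR d p q * NrmR d a b : ℤ) : ℝ) * ε ^ (-k:ℤ) * eltR d a' b' := by
            push_cast; ring
    have hM0 : NrmR d p q * NrmR d a b ≠ 0 := by
      rcases hη with h | h <;> rw [h] <;> simpa using hN0
    have hm : 0 < (NrmR d p q * NrmR d a b).natAbs := Int.natAbs_pos.mpr hM0
    have hn : 0 < u.natAbs := Int.natAbs_pos.mpr hu0
    have hup : IsUnitOR d (ε ^ (-k:ℤ)) := (hε _).mpr ⟨-k, Or.inl rfl⟩
    have hun : IsUnitOR d (-(ε ^ (-k:ℤ))) := (hε _).mpr ⟨-k, Or.inr rfl⟩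
    rcases Int.natAbs_eq (NrmR d p q * NrmR d a b) with h1 | h1 <;>
      rcases Int.natAbs_eq u with h2 | h2
    · refine hnsim ⟨ε ^ (-k:ℤ), hup, _, _, hm, hn, ?_⟩
      have h1R : (((NrmR d p q * NrmR d a b).natAbs : ℕ) : ℝ)
          = ((NrmR d p q * NrmR d a b : ℤ) : ℝ) := by
        have h := congrArg (fun z : ℤ => (z:ℝ)) h1
        simp only [Int.cast_natCast] at h
        exact h.symm
      have h2R : ((u.natAbs : ℕ) : ℝ) = (u : ℝ) := by
        have h := congrArg (fun z : ℤ => (z:ℝ)) h2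
        simp only [Int.cast_natCast] at h
        exact h.symm
      rw [h1R, h2R]
      linear_combination -hE2
    · refine hnsim ⟨-(ε ^ (-k:ℤ)), hun, _, _, hm, hn, ?_⟩
      have h1R : (((NrmR d p q * NrmR d a b).natAbs : ℕ) : ℝ)
          = ((NrmR d p q * NrmR d a b : ℤ) : ℝ) := by
        have h := congrArg (fun z : ℤ => (z:ℝ)) h1
        simp only [Int.cast_natCast] at h
        exact h.symm
      have h2R : ((u.natAbs : ℕ) : ℝ) = -(u : ℝ) := by
        have h := congrArg (fun z : ℤ => (z:ℝ)) h2
        simp only [Int.cast_neg, Int.cast_natCast] at h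
        linarith [h]
      rw [h1R, h2R]
      linear_combination hE2
    · refine hnsim ⟨-(ε ^ (-k:ℤ)), hun, _, _, hm, hn, ?_⟩
      have h1R : (((NrmR d p q * NrmR d a b).natAbs : ℕ) : ℝ)
          = -((NrmR d p q * NrmR d a b : ℤ) : ℝ) := by
        have h := congrArg (fun z : ℤ => (z:ℝ)) h1
        simp only [Int.cast_neg, Int.cast_natCast] at h
        linarith [h]
      have h2R : ((u.natAbs : ℕ) : ℝ) = (u : ℝ) := by
        have h := congrArg (fun z : ℤ => (z:ℝ)) h2
        simp only [Int.cast_natCast] at h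
        exact h.symm
      rw [h1R, h2R]
      linear_combination -hE2
    · refine hnsim ⟨ε ^ (-k:ℤ), hup, _, _, hm, hn, ?_⟩
      have h1R : (((NrmR d p q * NrmR d a b).natAbs : ℕ) : ℝ)
          = -((NrmR d p q * NrmR d a b : ℤ) : ℝ) := by
        have h := congrArg (fun z : ℤ => (z:ℝ)) h1
        simp only [Int.cast_neg, Int.cast_natCast] at h
        linarith [h]
      have h2R : ((u.natAbs : ℕ) : ℝ) = -(u : ℝ) := by
        have h := congrArg (fun z : ℤ => (z:ℝ)) h2
        simp only [Int.cast_neg, Int.cast_natCast] at h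
        linarith [h]
      rw [h1R, h2R]
      linear_combination hE2
  · -- Case B : γ = r √d
    have hbAuv : MF.bA d u v = -u := by
      rcases hη with h | h <;> rw [hcase, h] at hU <;> linarith [hU]
    obtain ⟨r, hγr, hNuvr⟩ : ∃ r : ℤ,
        eltR d u v = (r:ℝ) * Real.sqrt d ∧ NrmR d u v = -(d * r^2) := by
      by_cases h4 : d % 4 = 1
      · obtain ⟨t, ht, h1t, h2t⟩ := MF.exists_t h4
        have hbA' : MF.bA d u v = u + v := by unfold MF.bA; rw [if_pos h4]
        have hv2u : v = -(2*u) := by omega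
        refine ⟨-u, ?_, ?_⟩
        · rw [hv2u]
          simp only [eltR, omgR, if_pos h4]
          push_cast
          ring
        · rw [hv2u]
          simp only [NrmR, if_pos h4, h2t]
          rw [ht]
          ring
      · have hbA' : MF.bA d u v = u := by unfold MF.bA; rw [if_neg h4]
        have hu0' : u = 0 := by omega
        refine ⟨v, ?_, ?_⟩
        · rw [hu0']
          simp only [eltR, omgR, if_neg h4]
          push_cast
          ring
        · rw [hu0']
          simp only [NrmR, if_neg h4]
          ring
    have hγne : eltR d u v ≠ 0 := by
      rw [← hγ]
      exact mul_ne_zero (mul_ne_zero hα' hᾱ) hwbar0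
    have hr0 : r ≠ 0 := by
      intro h
      rw [h] at hγr
      simp at hγr
      exact hγne hγr
    set P := MF.mA d a b p q with hP
    set Q := MF.mB d a b p q with hQ
    have hβ : eltR d a b * ε ^ (k:ℤ) = eltR d P Q := by
      rw [hwpq]; exact MF.elt_mul hdQ _ _ _ _
    have hEc : eltR d (NrmR d p q * NrmR d a b * a') (NrmR d p q * NrmR d a b * b')
        = eltR d (r * MF.sA d P Q) (r * MF.sB d P Q) := by
      rw [MF.elt_smul (NrmR d p q * NrmR d a b) a' b',
        MF.elt_smul r (MF.sA d P Q) (MF.sB d P Q), ← MF.sqrt_mul_elt hdQ, ← hβ]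
      push_cast
      linear_combination -hE + (eltR d a b * ε ^ (k:ℤ)) * hγr
    obtain ⟨hA1, hB1⟩ := MF.elt_uniq hirr hEc
    have hη2 : (NrmR d p q : ℤ) * NrmR d p q = 1 := by
      rcases hη with h | h <;> rw [h] <;> norm_num
    have hαPQ : eltR d a b
        = eltR d (MF.mA d P Q (NrmR d p q * MF.bA d p q) (NrmR d p q * (-q)))
                 (MF.mB d P Q (NrmR d p q * MF.bA d p q) (NrmR d p q * (-q))) := by
      rw [← MF.elt_mul hdQ, MF.elt_smul (NrmR d p q) (MF.bA d p q) (-q), ← MF.elt_bar, ← hβ]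
      have hη2R : ((NrmR d p q : ℤ):ℝ) * ((NrmR d p q : ℤ):ℝ) = 1 := by
        exact_mod_cast hη2
      linear_combination (-(eltR d a b) * ((NrmR d p q : ℤ):ℝ)) * hwwbar
        + (-(eltR d a b)) * hη2R
    obtain ⟨hA2, hB2⟩ := MF.elt_uniq hirr hαPQ
    have hPQ1 : Int.gcd P Q = 1 := by
      have hdP : ((Int.gcd P Q : ℕ) : ℤ) ∣ P := Int.gcd_dvd_left _ _
      have hdQ' : ((Int.gcd P Q : ℕ) : ℤ) ∣ Q := Int.gcd_dvd_right _ _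
      have hda : ((Int.gcd P Q : ℕ) : ℤ) ∣ a := by
        rw [hA2]; unfold MF.mA; split
        · exact dvd_add (hdP.mul_right _) ((hdQ'.mul_right _).mul_right _)
        · exact dvd_add (hdP.mul_right _) ((hdQ'.mul_right _).mul_right _)
      have hdb : ((Int.gcd P Q : ℕ) : ℤ) ∣ b := by
        rw [hB2]; unfold MF.mB; split
        · exact dvd_add (dvd_add (hdP.mul_right _) (hdQ'.mul_right _)) (hdQ'.mul_right _)
        · exact dvd_add (hdP.mul_right _) (hdQ'.mul_right _)
      have hdvd1 : ((Int.gcd P Q : ℕ) : ℤ) ∣ ((Int.gcd a b : ℕ) : ℤ) := Int.dvd_coe_gcd hda hdb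
      rw [hab] at hdvd1
      have : (Int.gcd P Q) ∣ 1 := by exact_mod_cast hdvd1
      exact Nat.dvd_one.mp this
    have hNPQ : NrmR d P Q = NrmR d a b * NrmR d p q := by rw [hP, hQ, MF.nrm_mul]
    have hN20 : NrmR d p q * NrmR d a b ≠ 0 := by
      rcases hη with h | h <;> rw [h] <;> simpa using hN0
    have hkey : (NrmR d p q * NrmR d a b).natAbs
        = r.natAbs * Int.gcd (NrmR d p q * NrmR d a b) d := by
      by_cases h4 : d % 4 = 1
      · obtain ⟨t, ht, h1t, h2t⟩ := MF.exists_t h4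
        refine MF.key_arith2 d t P Q a' b' _ r hd ht hPQ1 hab' hN20 hr0 ?_ ?_ ?_
        · have h := hA1
          unfold MF.sA at h
          rw [if_pos h4, h1t] at h
          exact h
        · have h := hB1
          unfold MF.sB at h
          rw [if_pos h4] at h
          exact h
        · have h : P ^ 2 + P * Q + Q ^ 2 * (-t) = NrmR d P Q := by
            simp only [NrmR, if_pos h4, h2t]
          rw [hNPQ] at h
          linarith [h]
      · refine MF.key_arith1 d P Q a' b' _ r hd hPQ1 hab' hN20 hr0 ?_ ?_ ?_
        · have h := hA1
          unfold MF.sA at h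
          rw [if_neg h4] at h
          exact h
        · have h := hB1
          unfold MF.sB at h
          rw [if_neg h4] at h
          exact h
        · have h : P ^ 2 - d * Q ^ 2 = NrmR d P Q := by
            simp only [NrmR, if_neg h4]
          rw [hNPQ] at h
          linarith [h]
    have hNN2 : NrmR d a' b' * NrmR d a b * NrmR d p q = -(d * r^2) := by
      rw [← hNuv, hNuvr]
    set g := Int.gcd (NrmR d a b) d with hg
    have hgcdeq : Int.gcd (NrmR d p q * NrmR d a b) d = g := by
      rcases hη with h | h <;> rw [h] <;> simp [hg, Int.gcd, Int.natAbs_mul]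
    have hnateq : (NrmR d p q * NrmR d a b).natAbs = (NrmR d a b).natAbs := by
      rcases hη with h | h <;> rw [h] <;> simp [Int.natAbs_mul]
    have hNabs : (NrmR d a b).natAbs = r.natAbs * g := by
      rw [← hnateq, ← hgcdeq]; exact hkey
    have habsNN : |NrmR d a b * NrmR d a' b'| = d * r^2 := by
      rcases hη with h | h
      · have h' : NrmR d a b * NrmR d a' b' = -(d * r^2) := by
          rw [h] at hNN2; linarith [hNN2]
        rw [h', abs_neg, abs_of_nonneg (by positivity)]
      · have h' : NrmR d a b * NrmR d a' b' = d * r^2 := by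
          rw [h] at hNN2; linarith [hNN2]
        rw [h']
        exact abs_of_nonneg (by positivity)
    rw [habsNN]
    have hL : Real.sqrt (((d * r^2 : ℤ)):ℝ) = Real.sqrt d * |(r:ℝ)| := by
      push_cast
      rw [Real.sqrt_mul hdR, Real.sqrt_sq_eq_abs]
    rw [hL]
    have hNabsR : ((|NrmR d a b| : ℤ) : ℝ) = ((r.natAbs : ℕ):ℝ) * ((g:ℕ):ℝ) := by
      rw [Int.abs_eq_natAbs, hNabs, Int.cast_natCast, Nat.cast_mul]
    rw [hNabsR]
    have hrabs : |(r:ℝ)| = ((r.natAbs : ℕ):ℝ) := by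
      rw [← Int.cast_abs, Int.abs_eq_natAbs, Int.cast_natCast]
    rw [hrabs]
    have hg0 : g ≠ 0 := by
      intro h
      rw [hg] at h
      exact hN0 (Int.gcd_eq_zero_iff.mp h).1
    have hgR : ((g:ℕ):ℝ) ≠ 0 := Nat.cast_ne_zero.mpr hg0
    field_simp
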